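/- Let B = [a₁,b₁]×⋯×[a_n,b_n] be an axis-parallel box with a_ι < b_ι, and let f ∈ C(B). For x ∈ B and ι ∈ [1:n], define f_{x,ι} : [−1,1] → ℂ by f_{x,ι}(t) := f(x₁,…,x_{ι−1},Φ_{[a_ι,b_ι]}(t),x_{ι+1},…,x_n). Then ‖f − 𝕀_B[f]‖_{∞,B} ≤ Σ_{ι=1}^n Λ_m^{ι−1} · max{‖f_{x,ι} − 𝕀[f_{x,ι}]‖_{∞,[−1,1]} : x ∈ B}. -/

import Mathlib

open Complex Set

/-- The axis-parallel box `[a₁,b₁] × ⋯ × [a_n,b_n]`. -/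
def boxSet {n : ℕ} (a b : Fin n → ℝ) : Set (Fin n → ℝ) := {x | ∀ ι, x ι ∈ Set.Icc (a ι) (b ι)}

/-- Lagrange polynomial `L_ν(z) = ∏_{μ≠ν} (z−ξ_μ)/(ξ_ν−ξ_μ)` for nodes `ξ` on `[−1,1]`. -/
noncomputable def lagrangeC {m : ℕ} (ξ : Fin (m + 1) → ℝ) (ν : Fin (m + 1)) (z : ℂ) : ℂ :=
  ∏ μ ∈ Finset.univ.erase ν, (z - (ξ μ : ℂ)) / ((ξ ν : ℂ) - (ξ μ : ℂ))

/-- Interpolation operator `𝕀[f] = Σ_ν f(ξ_ν)·L_ν` on `[−1,1]`. -/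
noncomputable def interpC {m : ℕ} (ξ : Fin (m + 1) → ℝ) (f : ℝ → ℂ) (x : ℝ) : ℂ :=
  ∑ ν, f (ξ ν) * lagrangeC ξ ν (x : ℂ)

/-- The maximum norm `‖f‖_{∞,s}` of a function on a set. -/
noncomputable def supNormOn (f : ℝ → ℂ) (s : Set ℝ) : ℝ :=
  sSup ((fun x => ‖f x‖) '' s)

/-- The Lebesgue constant `Λ_m = sup{‖𝕀[f]‖_{∞,[−1,1]}/‖f‖_{∞,[−1,1]} : f ∈ C[−1,1] \ {0}}`. -/
noncomputable def lebesgueConst {m : ℕ} (ξ : Fin (m + 1) → ℝ) : ℝ :=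
  sSup {r : ℝ | ∃ f : ℝ → ℂ, ContinuousOn f (Set.Icc (-1) 1) ∧
    (∃ x ∈ Set.Icc (-1 : ℝ) 1, f x ≠ 0) ∧
    r = supNormOn (interpC ξ f) (Set.Icc (-1) 1) / supNormOn f (Set.Icc (-1) 1)}

/-- The affine map `Φ_{[a,b]}(t) = (b+a)/2 + (b−a)/2·t` taking `[−1,1]` to `[a,b]`. -/
noncomputable def phiAB (a b t : ℝ) : ℝ := (b + a) / 2 + (b - a) / 2 * t

/-- The inverse `Φ_{[a,b]}^{−1}(x) = (2x − a − b)/(b − a)`. -/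
noncomputable def phiInvAB (a b x : ℝ) : ℝ := (2 * x - (a + b)) / (b - a)

/-- Transformed tensor interpolation point `ξ_{B,ν}` of the box `[a₁,b₁]×⋯×[a_n,b_n]`. -/
noncomputable def xiPoint {n m : ℕ} (ξ : Fin (m + 1) → ℝ) (a b : Fin n → ℝ)
    (ν : Fin n → Fin (m + 1)) : Fin n → ℝ :=
  fun ι => phiAB (a ι) (b ι) (ξ (ν ι))

/-- Transformed tensor Lagrange function `L_{B,ν}(x) = ∏_ι L_{ν_ι}(Φ_{[a_ι,b_ι]}^{−1}(x_ι))`. -/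
noncomputable def lagTensor {n m : ℕ} (ξ : Fin (m + 1) → ℝ) (a b : Fin n → ℝ)
    (ν : Fin n → Fin (m + 1)) (x : Fin n → ℝ) : ℂ :=
  ∏ ι, lagrangeC ξ (ν ι) ((phiInvAB (a ι) (b ι) (x ι) : ℝ) : ℂ)

/-- The tensor interpolation operator
`𝕀_B[f] = Σ_{ν} f(ξ_{B,ν})·L_{B,ν}` on the box `B = [a₁,b₁]×⋯×[a_n,b_n]`. -/
noncomputable def tensorInterp {n m : ℕ} (ξ : Fin (m + 1) → ℝ) (a b : Fin n → ℝ)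
    (f : (Fin n → ℝ) → ℂ) (x : Fin n → ℝ) : ℂ :=
  ∑ ν : Fin n → Fin (m + 1), f (xiPoint ξ a b ν) * lagTensor ξ a b ν x

/- sup norm helpers -/
lemma supNormOn_le {f : ℝ → ℂ} {s : Set ℝ} {K : ℝ} (hs : s.Nonempty)
    (h : ∀ t ∈ s, ‖f t‖ ≤ K) : supNormOn f s ≤ K := by
  apply csSup_le (hs.image _)
  rintro r ⟨t, ht, rfl⟩; exact h t ht

lemma le_supNormOn {f : ℝ → ℂ} {s : Set ℝ} {t : ℝ} (ht : t ∈ s) {K : ℝ}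
    (hb : ∀ u ∈ s, ‖f u‖ ≤ K) : ‖f t‖ ≤ supNormOn f s :=
  le_csSup ⟨K, by rintro r ⟨u, hu, rfl⟩; exact hb u hu⟩ ⟨t, ht, rfl⟩

lemma supNormOn_nonneg {f : ℝ → ℂ} {s : Set ℝ} (hs : s.Nonempty) {K : ℝ}
    (hb : ∀ u ∈ s, ‖f u‖ ≤ K) : 0 ≤ supNormOn f s := by
  obtain ⟨t, ht⟩ := hs
  exact (norm_nonneg _).trans (le_supNormOn ht hb)

/- bound for continuous function on Icc -/
lemma exists_bound_Icc {f : ℝ → ℂ} (hf : ContinuousOn f (Icc (-1 : ℝ) 1)) :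
    ∃ K, ∀ u ∈ Icc (-1 : ℝ) 1, ‖f u‖ ≤ K := by
  obtain ⟨C, hC⟩ := isCompact_Icc.exists_bound_of_continuousOn hf
  exact ⟨C, fun u hu => by simpa using hC u hu⟩

lemma lagrangeC_continuous {m : ℕ} (ξ : Fin (m + 1) → ℝ) (ν : Fin (m + 1)) :
    Continuous (fun t : ℝ => lagrangeC ξ ν (t : ℂ)) := by
  unfold lagrangeC
  exact continuous_finset_prod _ fun μ _ =>
    (Complex.continuous_ofReal.sub continuous_const).div_const _

/-- a common bound for all Lagrange polynomials on Icc -/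
lemma exists_lag_bound {m : ℕ} (ξ : Fin (m + 1) → ℝ) :
    ∃ C : Fin (m + 1) → ℝ, (∀ ν, 0 ≤ C ν) ∧
      ∀ ν, ∀ t ∈ Icc (-1 : ℝ) 1, ‖lagrangeC ξ ν (t : ℂ)‖ ≤ C ν := by
  have h : ∀ ν : Fin (m + 1), ∃ c : ℝ, 0 ≤ c ∧
      ∀ t ∈ Icc (-1 : ℝ) 1, ‖lagrangeC ξ ν (t : ℂ)‖ ≤ c := by
    intro ν
    obtain ⟨c, hc⟩ := isCompact_Icc.exists_bound_of_continuousOn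
      ((lagrangeC_continuous ξ ν).continuousOn (s := Icc (-1 : ℝ) 1))
    refine ⟨max c 0, le_max_right _ _, fun t ht => ?_⟩
    exact le_trans (by simpa using hc t ht) (le_max_left _ _)
  choose C h0 hC using h
  exact ⟨C, h0, hC⟩

lemma interpC_bound {m : ℕ} (ξ : Fin (m + 1) → ℝ) (hξ : ∀ ν, ξ ν ∈ Set.Icc (-1 : ℝ) 1)
    {C : Fin (m + 1) → ℝ} (h0 : ∀ ν, 0 ≤ C ν)
    (hC : ∀ ν, ∀ t ∈ Icc (-1 : ℝ) 1, ‖lagrangeC ξ ν (t : ℂ)‖ ≤ C ν)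
    {g : ℝ → ℂ} {K : ℝ} (hg : ∀ u ∈ Icc (-1 : ℝ) 1, ‖g u‖ ≤ K)
    {t : ℝ} (ht : t ∈ Icc (-1 : ℝ) 1) :
    ‖interpC ξ g t‖ ≤ (∑ ν, C ν) * K := by
  unfold interpC
  calc ‖∑ ν, g (ξ ν) * lagrangeC ξ ν (t : ℂ)‖
      ≤ ∑ ν, ‖g (ξ ν) * lagrangeC ξ ν (t : ℂ)‖ := by
        simpa using norm_sum_le Finset.univ (fun ν => g (ξ ν) * lagrangeC ξ ν (t : ℂ))
    _ ≤ ∑ ν, K * C ν := by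
        refine Finset.sum_le_sum fun ν _ => ?_
        rw [norm_mul]
        exact mul_le_mul (hg _ (hξ ν)) (hC ν t ht) (norm_nonneg _)
          (le_trans (norm_nonneg _) (hg _ (hξ ν)))
    _ = (∑ ν, C ν) * K := by rw [Finset.sum_mul]; exact Finset.sum_congr rfl fun ν _ => mul_comm _ _

lemma lebesgueSet_bddAbove {m : ℕ} (ξ : Fin (m + 1) → ℝ) (hξ : ∀ ν, ξ ν ∈ Set.Icc (-1 : ℝ) 1) :
    BddAbove {r : ℝ | ∃ f : ℝ → ℂ, ContinuousOn f (Set.Icc (-1) 1) ∧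
      (∃ x ∈ Set.Icc (-1 : ℝ) 1, f x ≠ 0) ∧
      r = supNormOn (interpC ξ f) (Set.Icc (-1) 1) / supNormOn f (Set.Icc (-1) 1)} := by
  obtain ⟨C, h0, hC⟩ := exists_lag_bound ξ
  refine ⟨∑ ν, C ν, ?_⟩
  rintro r ⟨g, hgc, ⟨x0, hx0, hgx0⟩, rfl⟩
  obtain ⟨K, hK⟩ := exists_bound_Icc hgc
  have hNpos : 0 < supNormOn g (Icc (-1) 1) :=
    lt_of_lt_of_le (norm_pos_iff.mpr hgx0) (le_supNormOn hx0 hK)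
  rw [div_le_iff₀ hNpos]
  refine supNormOn_le ⟨0, by norm_num⟩ fun t ht => ?_
  calc ‖interpC ξ g t‖ ≤ (∑ ν, C ν) * supNormOn g (Icc (-1) 1) :=
        interpC_bound ξ hξ h0 hC (fun u hu => le_supNormOn hu hK) ht
    _ = _ := rfl

lemma lebesgueConst_nonneg {m : ℕ} (ξ : Fin (m + 1) → ℝ) (hξ : ∀ ν, ξ ν ∈ Set.Icc (-1 : ℝ) 1) :
    0 ≤ lebesgueConst ξ := by
  obtain ⟨C, h0, hC⟩ := exists_lag_bound ξ
  have hmem : supNormOn (interpC ξ (fun _ => 1)) (Set.Icc (-1) 1) / supNormOn (fun _ => (1:ℂ)) (Set.Icc (-1) 1)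
      ∈ {r : ℝ | ∃ f : ℝ → ℂ, ContinuousOn f (Set.Icc (-1) 1) ∧
      (∃ x ∈ Set.Icc (-1 : ℝ) 1, f x ≠ 0) ∧
      r = supNormOn (interpC ξ f) (Set.Icc (-1) 1) / supNormOn f (Set.Icc (-1) 1)} :=
    ⟨fun _ => 1, continuousOn_const, ⟨0, by norm_num, one_ne_zero⟩, rfl⟩
  have h1 : (0:ℝ) ≤ supNormOn (interpC ξ (fun _ => 1)) (Set.Icc (-1) 1) / supNormOn (fun _ => (1:ℂ)) (Set.Icc (-1) 1) := by
    apply div_nonneg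
    · exact supNormOn_nonneg ⟨0, by norm_num⟩
        (fun u hu => interpC_bound ξ hξ h0 hC (K := 1) (fun v _ => by simp) hu)
    · exact supNormOn_nonneg ⟨0, by norm_num⟩ (K := 1) (fun v _ => by simp)
  exact le_trans h1 (le_csSup (lebesgueSet_bddAbove ξ hξ) hmem)

/-- Key 1-D estimate. -/
lemma key1D {m : ℕ} (ξ : Fin (m + 1) → ℝ) (hξ : ∀ ν, ξ ν ∈ Set.Icc (-1 : ℝ) 1)
    {g : ℝ → ℂ} (hg : ContinuousOn g (Icc (-1) 1)) {S : ℝ} (hS : 0 ≤ S)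
    (hgS : ∀ u ∈ Icc (-1 : ℝ) 1, ‖g u‖ ≤ S) :
    ∀ t ∈ Icc (-1 : ℝ) 1, ‖interpC ξ g t‖ ≤ lebesgueConst ξ * S := by
  intro t ht
  obtain ⟨C, h0, hC⟩ := exists_lag_bound ξ
  by_cases hz : ∃ u ∈ Icc (-1 : ℝ) 1, g u ≠ 0
  · obtain ⟨u, hu, hgu⟩ := hz
    have hNpos : 0 < supNormOn g (Icc (-1) 1) :=
      lt_of_lt_of_le (norm_pos_iff.mpr hgu) (le_supNormOn hu hgS)
    have hmem : supNormOn (interpC ξ g) (Set.Icc (-1) 1) / supNormOn g (Set.Icc (-1) 1)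
        ∈ {r : ℝ | ∃ f : ℝ → ℂ, ContinuousOn f (Set.Icc (-1) 1) ∧
        (∃ x ∈ Set.Icc (-1 : ℝ) 1, f x ≠ 0) ∧
        r = supNormOn (interpC ξ f) (Set.Icc (-1) 1) / supNormOn f (Set.Icc (-1) 1)} :=
      ⟨g, hg, ⟨u, hu, hgu⟩, rfl⟩
    have hr : supNormOn (interpC ξ g) (Set.Icc (-1) 1) / supNormOn g (Set.Icc (-1) 1) ≤ lebesgueConst ξ :=
      le_csSup (lebesgueSet_bddAbove ξ hξ) hmem
    have h2 : supNormOn (interpC ξ g) (Set.Icc (-1) 1) ≤ lebesgueConst ξ * supNormOn g (Set.Icc (-1) 1) :=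
      (div_le_iff₀ hNpos).mp hr
    have h3 : ‖interpC ξ g t‖ ≤ supNormOn (interpC ξ g) (Set.Icc (-1) 1) :=
      le_supNormOn ht (fun v hv => interpC_bound ξ hξ h0 hC hgS hv)
    calc ‖interpC ξ g t‖ ≤ lebesgueConst ξ * supNormOn g (Set.Icc (-1) 1) := h3.trans h2
      _ ≤ lebesgueConst ξ * S := by
          exact mul_le_mul_of_nonneg_left (supNormOn_le ⟨0, by norm_num⟩ hgS)
            (lebesgueConst_nonneg ξ hξ)
  · push_neg at hz
    have : interpC ξ g t = 0 := by
      unfold interpC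
      exact Finset.sum_eq_zero fun ν _ => by rw [hz _ (hξ ν), zero_mul]
    rw [this, norm_zero]
    exact mul_nonneg (lebesgueConst_nonneg ξ hξ) hS

/-- 1-D interpolation applied to coordinate `ι`. -/
noncomputable def oneD {n m : ℕ} (ξ : Fin (m + 1) → ℝ) (a b : Fin n → ℝ) (ι : Fin n)
    (g : (Fin n → ℝ) → ℂ) (x : Fin n → ℝ) : ℂ :=
  ∑ ν, g (Function.update x ι (phiAB (a ι) (b ι) (ξ ν))) *
    lagrangeC ξ ν ((phiInvAB (a ι) (b ι) (x ι) : ℝ) : ℂ)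

/-- `RR k g = oneD 0 (oneD 1 (⋯ (oneD (k-1) g)))`. -/
noncomputable def RR {n m : ℕ} (ξ : Fin (m + 1) → ℝ) (a b : Fin n → ℝ) :
    ℕ → ((Fin n → ℝ) → ℂ) → ((Fin n → ℝ) → ℂ)
  | 0, g => g
  | (k+1), g => if h : k < n then RR ξ a b k (oneD ξ a b ⟨k, h⟩ g) else RR ξ a b k g

/-- Partial tensor interpolation in coordinates `≥ j`. -/
noncomputable def AA {n m : ℕ} (ξ : Fin (m + 1) → ℝ) (a b : Fin n → ℝ)
    (f : (Fin n → ℝ) → ℂ) (j : ℕ) (x : Fin n → ℝ) : ℂ :=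
  ∑ ν : Fin n → Fin (m + 1),
    f (fun i => if j ≤ i.val then phiAB (a i) (b i) (ξ (ν i)) else x i) *
    ∏ i, (if j ≤ i.val then lagrangeC ξ (ν i) ((phiInvAB (a i) (b i) (x i) : ℝ) : ℂ)
          else (if ν i = 0 then 1 else 0))

lemma AA_zero {n m : ℕ} (ξ : Fin (m + 1) → ℝ) (a b : Fin n → ℝ) (f : (Fin n → ℝ) → ℂ)
    (x : Fin n → ℝ) : AA ξ a b f 0 x = tensorInterp ξ a b f x := by
  unfold AA tensorInterp xiPoint lagTensor
  simp

lemma AA_top {n m : ℕ} (ξ : Fin (m + 1) → ℝ) (a b : Fin n → ℝ) (f : (Fin n → ℝ) → ℂ)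
    (x : Fin n → ℝ) : AA ξ a b f n x = f x := by
  unfold AA
  have hlt : ∀ i : Fin n, ¬ (n ≤ i.val) := fun i => not_le.mpr i.isLt
  rw [Finset.sum_eq_single (fun _ => (0 : Fin (m + 1)))]
  · simp [hlt]
  · intro ν _ hν
    have : ∃ i, ν i ≠ 0 := by
      by_contra h; push_neg at h; exact hν (funext h)
    obtain ⟨i, hi⟩ := this
    apply mul_eq_zero_of_right
    apply Finset.prod_eq_zero (Finset.mem_univ i)
    simp [hlt i, hi]
  · intro h; exact absurd (Finset.mem_univ _) h

/-- the reindexing lemma -/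
lemma sum_update {n m : ℕ} (j₀ : Fin n) (μ : Fin (m + 1))
    (H : (Fin n → Fin (m + 1)) → ℂ) :
    (∑ ν : Fin n → Fin (m + 1), if ν j₀ = 0 then H (Function.update ν j₀ μ) else 0)
      = ∑ ρ : Fin n → Fin (m + 1), if ρ j₀ = μ then H ρ else 0 := by
  have hbij : Function.Bijective
      (fun ν : Fin n → Fin (m + 1) => Function.update ν j₀ (Equiv.swap 0 μ (ν j₀))) := by
    apply Function.Involutive.bijective
    intro ν
    funext i
    by_cases hi : i = j₀
    · subst hi; simp
    · simp [Function.update_of_ne hi]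
  refine Fintype.sum_bijective _ hbij _ _ fun ν => ?_
  by_cases h : ν j₀ = 0
  · have hv : Function.update ν j₀ (Equiv.swap 0 μ (ν j₀)) = Function.update ν j₀ μ := by
      rw [h, Equiv.swap_apply_left]
    rw [hv, if_pos h, Function.update_self, if_pos rfl]
  · rw [if_neg h, if_neg ?_]
    simp only [Function.update_self]
    intro hc
    exact h ((Equiv.swap 0 μ).injective (by rw [hc, Equiv.swap_apply_left]))

lemma AA_step {n m : ℕ} (ξ : Fin (m + 1) → ℝ) (a b : Fin n → ℝ) (f : (Fin n → ℝ) → ℂ)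
    (j : ℕ) (hj : j < n) (x : Fin n → ℝ) :
    oneD ξ a b ⟨j, hj⟩ (AA ξ a b f (j + 1)) x = AA ξ a b f j x := by
  set j₀ : Fin n := ⟨j, hj⟩ with hj₀
  set t : ℂ := ((phiInvAB (a j₀) (b j₀) (x j₀) : ℝ) : ℂ) with ht
  set Q : (Fin n → Fin (m + 1)) → ℂ := fun ν =>
    ∏ i ∈ Finset.univ.erase j₀,
      (if j ≤ i.val then lagrangeC ξ (ν i) ((phiInvAB (a i) (b i) (x i) : ℝ) : ℂ)
       else (if ν i = 0 then 1 else 0)) with hQ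
  set W : (Fin n → Fin (m + 1)) → (Fin n → ℝ) := fun ν =>
    (fun i => if j ≤ i.val then phiAB (a i) (b i) (ξ (ν i)) else x i) with hW
  set H : (Fin n → Fin (m + 1)) → ℂ := fun ρ =>
    f (W ρ) * (lagrangeC ξ (ρ j₀) t * Q ρ) with hH
  -- RHS = ∑ ρ, H ρ
  have hRHS : AA ξ a b f j x = ∑ ρ, H ρ := by
    unfold AA
    refine Finset.sum_congr rfl fun ρ _ => ?_
    rw [hH]
    congr 1
    rw [← Finset.mul_prod_erase Finset.univ _ (Finset.mem_univ j₀)]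
    congr 1
    rw [if_pos (le_refl j)]
  rw [hRHS]
  -- LHS
  unfold oneD
  have hLHS : ∀ μ : Fin (m + 1),
      AA ξ a b f (j + 1) (Function.update x j₀ (phiAB (a j₀) (b j₀) (ξ μ))) *
        lagrangeC ξ μ t
      = ∑ ν : Fin n → Fin (m + 1),
          (if ν j₀ = 0 then H (Function.update ν j₀ μ) else 0) := by
    intro μ
    unfold AA
    rw [Finset.sum_mul]
    refine Finset.sum_congr rfl fun ν _ => ?_
    -- massage each term
    have harg : (fun i => if j + 1 ≤ i.val
          then phiAB (a i) (b i) (ξ (ν i))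
          else Function.update x j₀ (phiAB (a j₀) (b j₀) (ξ μ)) i)
        = W (Function.update ν j₀ μ) := by
      funext i
      simp only [hW]
      by_cases hij : i = j₀
      · subst hij
        simp only [Function.update_self]
        rw [if_neg (by simp [hj₀]), if_pos (by simp [hj₀])]
      · have hij' : i.val ≠ j := fun hc => hij (Fin.ext (by simp [hj₀, hc]))
        rw [Function.update_of_ne hij, Function.update_of_ne hij]
        by_cases hle : j ≤ i.val
        · rw [if_pos (by omega), if_pos hle]
        · rw [if_neg (by omega), if_neg hle]
    have hprod : (∏ i, (if j + 1 ≤ i.val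
          then lagrangeC ξ (ν i)
            ((phiInvAB (a i) (b i) (Function.update x j₀ (phiAB (a j₀) (b j₀) (ξ μ)) i) : ℝ) : ℂ)
          else (if ν i = 0 then 1 else 0)))
        = (if ν j₀ = 0 then 1 else 0) * Q (Function.update ν j₀ μ) := by
      rw [← Finset.mul_prod_erase Finset.univ _ (Finset.mem_univ j₀)]
      congr 1
      · rw [if_neg (by simp [hj₀])]
      · simp only [hQ]
        refine Finset.prod_congr rfl fun i hi => ?_
        have hij : i ≠ j₀ := (Finset.mem_erase.mp hi).1
        have hij' : i.val ≠ j := fun hc => hij (Fin.ext (by simp [hj₀, hc]))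
        rw [Function.update_of_ne hij, Function.update_of_ne hij]
        by_cases hle : j ≤ i.val
        · rw [if_pos (by omega), if_pos hle]
        · rw [if_neg (by omega), if_neg hle]
    rw [harg, hprod]
    by_cases h0 : ν j₀ = 0
    · rw [if_pos h0, if_pos h0, one_mul]
      simp only [hH, Function.update_self]
      ring
    · rw [if_neg h0, if_neg h0]
      ring
  calc (∑ μ, AA ξ a b f (j + 1) (Function.update x j₀ (phiAB (a j₀) (b j₀) (ξ μ))) *
        lagrangeC ξ μ t)
      = ∑ μ, ∑ ν : Fin n → Fin (m + 1),
          (if ν j₀ = 0 then H (Function.update ν j₀ μ) else 0) :=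
        Finset.sum_congr rfl fun μ _ => hLHS μ
    _ = ∑ μ, ∑ ρ : Fin n → Fin (m + 1), (if ρ j₀ = μ then H ρ else 0) :=
        Finset.sum_congr rfl fun μ _ => sum_update j₀ μ H
    _ = ∑ ρ : Fin n → Fin (m + 1), ∑ μ, (if ρ j₀ = μ then H ρ else 0) := Finset.sum_comm
    _ = ∑ ρ, H ρ := by
        refine Finset.sum_congr rfl fun ρ _ => ?_
        rw [Finset.sum_ite_eq Finset.univ (ρ j₀) (fun _ => H ρ), if_pos (Finset.mem_univ _)]


/- interval mapping facts -/
lemma phi_mem {a b : ℝ} (hab : a ≤ b) {t : ℝ} (ht : t ∈ Icc (-1 : ℝ) 1) :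
    phiAB a b t ∈ Icc a b := by
  obtain ⟨h1, h2⟩ := ht
  unfold phiAB
  constructor <;> nlinarith

lemma phiInv_mem {a b : ℝ} (hab : a < b) {c : ℝ} (hc : c ∈ Icc a b) :
    phiInvAB a b c ∈ Icc (-1 : ℝ) 1 := by
  obtain ⟨h1, h2⟩ := hc
  have hba : 0 < b - a := by linarith
  unfold phiInvAB
  rw [Set.mem_Icc, le_div_iff₀ hba, div_le_iff₀ hba]
  constructor <;> nlinarith

lemma phi_phiInv {a b : ℝ} (hab : a < b) (c : ℝ) : phiAB a b (phiInvAB a b c) = c := by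
  have : b - a ≠ 0 := by linarith
  unfold phiAB phiInvAB
  field_simp
  ring

lemma update_mem_box {n : ℕ} {a b : Fin n → ℝ} {x : Fin n → ℝ} (hx : x ∈ boxSet a b)
    {ι : Fin n} {c : ℝ} (hc : c ∈ Icc (a ι) (b ι)) :
    Function.update x ι c ∈ boxSet a b := by
  intro j
  rcases eq_or_ne j ι with h | h
  · subst h; simpa using hc
  · rw [Function.update_of_ne h]; exact hx j

/- continuity -/
lemma oneD_contOn {n m : ℕ} (ξ : Fin (m + 1) → ℝ) {a b : Fin n → ℝ}
    {g : (Fin n → ℝ) → ℂ} (hg : ContinuousOn g (boxSet a b)) (hab : ∀ ι, a ι ≤ b ι)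
    (hξ : ∀ ν, ξ ν ∈ Set.Icc (-1 : ℝ) 1) (ι : Fin n) :
    ContinuousOn (oneD ξ a b ι g) (boxSet a b) := by
  unfold oneD
  apply continuousOn_finset_sum
  intro ν _
  apply ContinuousOn.mul
  · apply hg.comp (continuous_id.update ι continuous_const).continuousOn
    intro x hx
    exact update_mem_box hx (phi_mem (hab ι) (hξ ν))
  · apply Continuous.continuousOn
    apply (lagrangeC_continuous ξ ν).comp
    unfold phiInvAB
    exact ((continuous_const.mul (continuous_apply ι)).sub continuous_const).div_const _

lemma slice_contOn {n : ℕ} {a b : Fin n → ℝ} {g : (Fin n → ℝ) → ℂ}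
    (hg : ContinuousOn g (boxSet a b)) (hab : ∀ ι, a ι ≤ b ι) (ι : Fin n)
    {x : Fin n → ℝ} (hx : x ∈ boxSet a b) :
    ContinuousOn (fun s : ℝ => g (Function.update x ι (phiAB (a ι) (b ι) s))) (Icc (-1) 1) := by
  apply hg.comp
  · apply Continuous.continuousOn
    apply (continuous_const.update ι ?_ : Continuous fun s : ℝ => Function.update x ι (phiAB (a ι) (b ι) s))
    unfold phiAB
    exact continuous_const.add (continuous_const.mul continuous_id)
  · intro s hs
    exact update_mem_box hx (phi_mem (hab ι) hs)

/- linearity of RR -/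
lemma oneD_sub {n m : ℕ} (ξ : Fin (m + 1) → ℝ) (a b : Fin n → ℝ) (ι : Fin n)
    (g h : (Fin n → ℝ) → ℂ) :
    oneD ξ a b ι (fun y => g y - h y) = fun y => oneD ξ a b ι g y - oneD ξ a b ι h y := by
  funext y
  unfold oneD
  rw [← Finset.sum_sub_distrib]
  exact Finset.sum_congr rfl fun ν _ => by ring

lemma RR_succ_pos {n m : ℕ} (ξ : Fin (m + 1) → ℝ) (a b : Fin n → ℝ) {k : ℕ} (hk : k < n)
    (g : (Fin n → ℝ) → ℂ) :
    RR ξ a b (k + 1) g = RR ξ a b k (oneD ξ a b ⟨k, hk⟩ g) := by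
  simp [RR, hk]

lemma RR_succ_neg {n m : ℕ} (ξ : Fin (m + 1) → ℝ) (a b : Fin n → ℝ) {k : ℕ} (hk : ¬ k < n)
    (g : (Fin n → ℝ) → ℂ) :
    RR ξ a b (k + 1) g = RR ξ a b k g := by
  simp [RR, hk]

lemma RR_sub {n m : ℕ} (ξ : Fin (m + 1) → ℝ) (a b : Fin n → ℝ) (k : ℕ) :
    ∀ (g h : (Fin n → ℝ) → ℂ),
      RR ξ a b k (fun y => g y - h y) = fun y => RR ξ a b k g y - RR ξ a b k h y := by
  induction k with
  | zero => intro g h; rfl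
  | succ k ih =>
    intro g h
    by_cases hk : k < n
    · rw [RR_succ_pos ξ a b hk, RR_succ_pos ξ a b hk, RR_succ_pos ξ a b hk, oneD_sub, ih]
    · rw [RR_succ_neg ξ a b hk, RR_succ_neg ξ a b hk, RR_succ_neg ξ a b hk, ih]

lemma RR_bound {n m : ℕ} (ξ : Fin (m + 1) → ℝ) (hξ : ∀ ν, ξ ν ∈ Set.Icc (-1 : ℝ) 1)
    {a b : Fin n → ℝ} (hab : ∀ ι, a ι < b ι) :
    ∀ k : ℕ, k ≤ n → ∀ (g : (Fin n → ℝ) → ℂ) (S : ℝ), ContinuousOn g (boxSet a b) → 0 ≤ S →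
      (∀ y ∈ boxSet a b, ‖g y‖ ≤ S) → ∀ x ∈ boxSet a b,
      ‖RR ξ a b k g x‖ ≤ lebesgueConst ξ ^ k * S := by
  intro k
  induction k with
  | zero =>
    intro _ g S hgc hS hgS x hx
    simpa [RR] using hgS x hx
  | succ k ih =>
    intro hkn g S hgc hS hgS x hx
    have hk : k < n := hkn
    have hable : ∀ ι, a ι ≤ b ι := fun ι => (hab ι).le
    have hb : ∀ y ∈ boxSet a b,
        ‖oneD ξ a b ⟨k, hk⟩ g y‖ ≤ lebesgueConst ξ * S := by
      intro y hy
      have h1 : oneD ξ a b ⟨k, hk⟩ g y =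
          interpC ξ (fun s => g (Function.update y ⟨k, hk⟩ (phiAB (a ⟨k, hk⟩) (b ⟨k, hk⟩) s)))
            (phiInvAB (a ⟨k, hk⟩) (b ⟨k, hk⟩) (y ⟨k, hk⟩)) := rfl
      rw [h1]
      exact key1D ξ hξ (slice_contOn hgc hable _ hy) hS
        (fun u hu => hgS _ (update_mem_box hy (phi_mem (hable _) hu))) _
        (phiInv_mem (hab _) (hy _))
    rw [RR_succ_pos ξ a b hk]
    calc ‖RR ξ a b k (oneD ξ a b ⟨k, hk⟩ g) x‖
        ≤ lebesgueConst ξ ^ k * (lebesgueConst ξ * S) :=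
          ih hk.le _ _ (oneD_contOn ξ hgc hable hξ _)
            (mul_nonneg (lebesgueConst_nonneg ξ hξ) hS) hb x hx
      _ = lebesgueConst ξ ^ (k + 1) * S := by rw [pow_succ]; ring

lemma RR_AA {n m : ℕ} (ξ : Fin (m + 1) → ℝ) (a b : Fin n → ℝ) (f : (Fin n → ℝ) → ℂ) :
    ∀ k : ℕ, k ≤ n → RR ξ a b k (AA ξ a b f k) = AA ξ a b f 0 := by
  intro k
  induction k with
  | zero => intro _; rfl
  | succ k ih =>
    intro h
    have hk : k < n := h
    rw [RR_succ_pos ξ a b hk]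
    have hstep : oneD ξ a b ⟨k, hk⟩ (AA ξ a b f (k + 1)) = AA ξ a b f k :=
      funext (AA_step ξ a b f k hk)
    rw [hstep]
    exact ih hk.le

lemma RR_tensor {n m : ℕ} (ξ : Fin (m + 1) → ℝ) (a b : Fin n → ℝ) (f : (Fin n → ℝ) → ℂ) :
    RR ξ a b n f = tensorInterp ξ a b f := by
  have h1 : AA ξ a b f n = f := funext (AA_top ξ a b f)
  have h2 : AA ξ a b f 0 = tensorInterp ξ a b f := funext (AA_zero ξ a b f)
  conv_lhs => rw [← h1]
  rw [RR_AA ξ a b f n le_rfl, h2]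


/-- tensor interpolation error:
`‖f − 𝕀_B[f]‖_{∞,B} ≤ Σ_{ι=1}^n Λ_m^{ι−1}·max_x ‖f_{x,ι} − 𝕀[f_{x,ι}]‖_{∞,[−1,1]}`,
where `f_{x,ι}(t) = f(x₁,…,x_{ι−1},Φ_{[a_ι,b_ι]}(t),x_{ι+1},…,x_n)`. -/
theorem stmt11 (n m : ℕ) (ξ : Fin (m + 1) → ℝ)
    (hξ : ∀ ν, ξ ν ∈ Set.Icc (-1 : ℝ) 1) (hinj : Function.Injective ξ)
    (a b : Fin n → ℝ) (hab : ∀ ι, a ι < b ι)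
    (f : (Fin n → ℝ) → ℂ) (hf : ContinuousOn f (boxSet a b)) :
    ∀ x ∈ boxSet a b,
      ‖f x - tensorInterp ξ a b f x‖ ≤
        ∑ ι : Fin n, (lebesgueConst ξ) ^ (ι : ℕ) *
          sSup {r : ℝ | ∃ x' ∈ boxSet a b,
            r = supNormOn
              (fun t => f (Function.update x' ι (phiAB (a ι) (b ι) t)) -
                interpC ξ (fun s => f (Function.update x' ι (phiAB (a ι) (b ι) s))) t)
              (Set.Icc (-1) 1)} := by
  intro x hx
  classical
  obtain ⟨C, hC0, hC⟩ := exists_lag_bound ξ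
  have hcomp : IsCompact (boxSet a b) := by
    have hbox : boxSet a b = Set.pi Set.univ (fun ι => Icc (a ι) (b ι)) := by
      ext y; simp [boxSet, Set.mem_pi, Set.mem_Icc, Pi.le_def, forall_and]
    rw [hbox]
    exact isCompact_univ_pi fun ι => isCompact_Icc
  obtain ⟨M0, hM0⟩ := hcomp.exists_bound_of_continuousOn hf
  set M := max M0 0 with hMdef
  have hM : ∀ y ∈ boxSet a b, ‖f y‖ ≤ M := fun y hy =>
    le_trans (by simpa using hM0 y hy) (le_max_left _ _)
  have hable : ∀ ι, a ι ≤ b ι := fun ι => (hab ι).le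
  set K : ℝ := M + (∑ ν, C ν) * M with hKdef
  set ESet : Fin n → Set ℝ := fun ι => {r : ℝ | ∃ x' ∈ boxSet a b,
      r = supNormOn
        (fun t => f (Function.update x' ι (phiAB (a ι) (b ι) t)) -
          interpC ξ (fun s => f (Function.update x' ι (phiAB (a ι) (b ι) s))) t)
        (Set.Icc (-1) 1)} with hESetdef
  have herrB : ∀ ι : Fin n, ∀ x' ∈ boxSet a b, ∀ t ∈ Icc (-1 : ℝ) 1,
      ‖f (Function.update x' ι (phiAB (a ι) (b ι) t)) -
        interpC ξ (fun s => f (Function.update x' ι (phiAB (a ι) (b ι) s))) t‖ ≤ K := by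
    intro ι x' hx' t ht
    have h1 : ‖f (Function.update x' ι (phiAB (a ι) (b ι) t))‖ ≤ M :=
      hM _ (update_mem_box hx' (phi_mem (hable ι) ht))
    have h2 : ∀ u ∈ Icc (-1 : ℝ) 1,
        ‖f (Function.update x' ι (phiAB (a ι) (b ι) u))‖ ≤ M :=
      fun u hu => hM _ (update_mem_box hx' (phi_mem (hable ι) hu))
    calc ‖f (Function.update x' ι (phiAB (a ι) (b ι) t)) -
          interpC ξ (fun s => f (Function.update x' ι (phiAB (a ι) (b ι) s))) t‖
        ≤ ‖f (Function.update x' ι (phiAB (a ι) (b ι) t))‖ +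
          ‖interpC ξ (fun s => f (Function.update x' ι (phiAB (a ι) (b ι) s))) t‖ := by
          simpa using norm_sub_le
            (f (Function.update x' ι (phiAB (a ι) (b ι) t)))
            (interpC ξ (fun s => f (Function.update x' ι (phiAB (a ι) (b ι) s))) t)
      _ ≤ M + (∑ ν, C ν) * M := add_le_add h1 (interpC_bound ξ hξ hC0 hC h2 ht)
  have hbddE : ∀ ι, BddAbove (ESet ι) := by
    intro ι
    refine ⟨K, ?_⟩
    rintro r ⟨x', hx', rfl⟩
    exact supNormOn_le ⟨0, by norm_num⟩ (fun t ht => herrB ι x' hx' t ht)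
  have hmemE : ∀ ι : Fin n, ∀ x' ∈ boxSet a b,
      supNormOn (fun t => f (Function.update x' ι (phiAB (a ι) (b ι) t)) -
        interpC ξ (fun s => f (Function.update x' ι (phiAB (a ι) (b ι) s))) t) (Set.Icc (-1) 1)
        ≤ sSup (ESet ι) := fun ι x' hx' => le_csSup (hbddE ι) ⟨x', hx', rfl⟩
  have hEnn : ∀ ι, 0 ≤ sSup (ESet ι) := by
    intro ι
    refine le_trans ?_ (hmemE ι x hx)
    exact supNormOn_nonneg ⟨0, by norm_num⟩ (fun u hu => herrB ι x hx u hu)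
  have hslice : ∀ ι : Fin n, ∀ y ∈ boxSet a b,
      ‖f y - oneD ξ a b ι f y‖ ≤ sSup (ESet ι) := by
    intro ι y hy
    have ht0 : phiInvAB (a ι) (b ι) (y ι) ∈ Icc (-1 : ℝ) 1 := phiInv_mem (hab ι) (hy ι)
    have h1 : f y - oneD ξ a b ι f y =
        f (Function.update y ι (phiAB (a ι) (b ι) (phiInvAB (a ι) (b ι) (y ι)))) -
          interpC ξ (fun s => f (Function.update y ι (phiAB (a ι) (b ι) s)))
            (phiInvAB (a ι) (b ι) (y ι)) := by
      rw [phi_phiInv (hab ι), Function.update_eq_self]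
      rfl
    rw [h1]
    exact le_trans
      (le_supNormOn (f := fun t => f (Function.update y ι (phiAB (a ι) (b ι) t)) -
          interpC ξ (fun s => f (Function.update y ι (phiAB (a ι) (b ι) s))) t)
        ht0 (fun u hu => herrB ι y hy u hu))
      (hmemE ι y hy)
  have hterm : ∀ (k : ℕ) (hk : k < n),
      ‖RR ξ a b k (fun y => f y - oneD ξ a b ⟨k, hk⟩ f y) x‖ ≤
        lebesgueConst ξ ^ k * sSup (ESet ⟨k, hk⟩) := by
    intro k hk
    exact RR_bound ξ hξ hab k hk.le _ _
      (hf.sub (oneD_contOn ξ hf hable hξ _)) (hEnn _) (fun y hy => hslice ⟨k, hk⟩ y hy) x hx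
  have htel : f x - RR ξ a b n f x =
      ∑ k ∈ Finset.range n, (RR ξ a b k f x - RR ξ a b (k + 1) f x) := by
    rw [Finset.sum_range_sub' (fun k => RR ξ a b k f x) n]
    rfl
  have hdiff : ∀ (k : ℕ) (hk : k < n), RR ξ a b k f x - RR ξ a b (k + 1) f x =
      RR ξ a b k (fun y => f y - oneD ξ a b ⟨k, hk⟩ f y) x := by
    intro k hk
    rw [RR_succ_pos ξ a b hk, RR_sub ξ a b k]
  have hRTn : RR ξ a b n f x = tensorInterp ξ a b f x := congrFun (RR_tensor ξ a b f) x
  show ‖f x - tensorInterp ξ a b f x‖ ≤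
      ∑ ι : Fin n, lebesgueConst ξ ^ (ι : ℕ) * sSup (ESet ι)
  calc ‖f x - tensorInterp ξ a b f x‖
      = ‖∑ k ∈ Finset.range n, (RR ξ a b k f x - RR ξ a b (k + 1) f x)‖ := by
        rw [← hRTn, htel]
    _ ≤ ∑ k ∈ Finset.range n, ‖RR ξ a b k f x - RR ξ a b (k + 1) f x‖ := by
        simpa using norm_sum_le (Finset.range n)
          (fun k => RR ξ a b k f x - RR ξ a b (k + 1) f x)
    _ ≤ ∑ k ∈ Finset.range n,
          (if h : k < n then lebesgueConst ξ ^ k * sSup (ESet ⟨k, h⟩) else 0) := by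
        refine Finset.sum_le_sum fun k hkmem => ?_
        have hk : k < n := Finset.mem_range.mp hkmem
        rw [dif_pos hk, hdiff k hk]
        exact hterm k hk
    _ = ∑ ι : Fin n, lebesgueConst ξ ^ (ι : ℕ) * sSup (ESet ι) := by
        rw [← Fin.sum_univ_eq_sum_range
          (fun k => if h : k < n then lebesgueConst ξ ^ k * sSup (ESet ⟨k, h⟩) else 0) n]
        exact Finset.sum_congr rfl fun ι _ => dif_pos ι.isLt
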